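/- Upper bound on PS (by exchanging x with x' and y with y' in the PN bound): for every P as in the context, P(Y₁ = true ∧ X = false ∧ Y = false) ≤ P(Y₁ = true) − P(X = true ∧ Y = true); consequently, if P(X = false ∧ Y = false) > 0 then PS ≤ min {1, (P(Y₁ = true) − P(X = true ∧ Y = true)) / P(X = false ∧ Y = false)}. -/
import Mathlib


/-- The probability of an event `E` under a mass function `P` on a finite type. -/
noncomputable def prob {Ω : Type*} [Fintype Ω] (P : Ω → ℝ) (E : Set Ω) : ℝ :=
  ∑ ω, E.indicator P ω

/-- The binary counterfactual sample space: coordinates `(Y₀, Y₁, X)`, i.e. the potential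
outcomes `Y₀ = Y_{x'}` and `Y₁ = Y_x` and the treatment `X`. -/
abbrev BOmega : Type := Bool × Bool × Bool

/-- The observed outcome defined by consistency: `Y := if X then Y₁ else Y₀`. -/
def Yobs (ω : BOmega) : Bool := if ω.2.2 then ω.2.1 else ω.1

/-- Upper bound on PS: `P(y_x, x', y') ≤ P(y_x) − P(x, y)`; consequently, if
`P(x', y') > 0` then `PS ≤ min {1, (P(y_x) − P(x, y)) / P(x', y')}`. -/
theorem ps_upper_bound
    (P : BOmega → ℝ) (hP0 : ∀ ω, 0 ≤ P ω) (hP1 : ∑ ω, P ω = 1) :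
    (prob P {ω | ω.2.1 = true ∧ ω.2.2 = false ∧ Yobs ω = false} ≤
      prob P {ω | ω.2.1 = true} - prob P {ω | ω.2.2 = true ∧ Yobs ω = true}) ∧
    (0 < prob P {ω | ω.2.2 = false ∧ Yobs ω = false} →
      prob P {ω | ω.2.1 = true ∧ ω.2.2 = false ∧ Yobs ω = false} /
          prob P {ω | ω.2.2 = false ∧ Yobs ω = false} ≤
        min 1 ((prob P {ω | ω.2.1 = true} - prob P {ω | ω.2.2 = true ∧ Yobs ω = true}) /
          prob P {ω | ω.2.2 = false ∧ Yobs ω = false})) := by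

  have e : ∀ (E : Set BOmega), prob P E = ∑ ω, E.indicator P ω := fun E => rfl
  have h0 := hP0
  have key : prob P {ω | ω.2.1 = true ∧ ω.2.2 = false ∧ Yobs ω = false} ≤
      prob P {ω | ω.2.1 = true} - prob P {ω | ω.2.2 = true ∧ Yobs ω = true} := by
    simp only [prob, Fintype.sum_prod_type, Fintype.sum_bool, Set.indicator, Set.mem_setOf_eq,
      Yobs]
    norm_num
    nlinarith [hP0 (true,true,true), hP0 (true,true,false), hP0 (true,false,true),
      hP0 (true,false,false), hP0 (false,true,true), hP0 (false,true,false),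
      hP0 (false,false,true), hP0 (false,false,false)]
  refine ⟨key, fun hpos => ?_⟩
  have hnum_le : prob P {ω | ω.2.1 = true ∧ ω.2.2 = false ∧ Yobs ω = false} ≤
      prob P {ω | ω.2.2 = false ∧ Yobs ω = false} := by
    simp only [prob, Fintype.sum_prod_type, Fintype.sum_bool, Set.indicator, Set.mem_setOf_eq,
      Yobs]
    norm_num
    nlinarith [hP0 (true,true,true), hP0 (true,true,false), hP0 (true,false,true),
      hP0 (true,false,false), hP0 (false,true,true), hP0 (false,true,false),
      hP0 (false,false,true), hP0 (false,false,false)]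
  refine le_min ?_ ?_
  · rw [div_le_one hpos]; exact hnum_le
  · exact div_le_div_of_nonneg_right key hpos.le
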